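/- arXiv:1311.3874 — 4 statements merged into one kernel-verified Lean document; each statement's English description precedes it below -/
import Mathlib

section
/- If r ≥ 2 integers x₁, …, xᵣ each at least 2 satisfy x₁·x₂⋯xᵣ = x₁ + ⋯ + xᵣ + (n − r) for some n ≥ r, then x₁·x₂⋯xᵣ ≤ 2n. -/
lemma esp_aux1 {ι : Type*} (f : ι → ℕ) (s : Finset ι) (hs : s.Nonempty)
    (hf : ∀ i ∈ s, 2 ≤ f i) : ∑ i ∈ s, f i + 1 ≤ ∏ i ∈ s, f i + s.card := by
  classical
  induction s using Finset.cons_induction with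
  | empty => exact absurd hs (by simp)
  | cons a t ha ih =>
    rcases t.eq_empty_or_nonempty with rfl | ht
    · simp
    · have IH := ih ht (fun i hi => hf i (Finset.mem_cons_of_mem hi))
      have hfa := hf a (Finset.mem_cons_self a t)
      have hp : 2 ≤ ∏ i ∈ t, f i := by
        obtain ⟨b, hb⟩ := ht
        calc 2 ≤ f b := hf b (Finset.mem_cons_of_mem hb)
        _ ≤ ∏ i ∈ t, f i := Finset.single_le_prod'
            (fun i hi => by have := hf i (Finset.mem_cons_of_mem hi); omega) hb
      have key : f a + ∏ i ∈ t, f i ≤ f a * ∏ i ∈ t, f i :=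
        Nat.add_le_mul hfa hp
      simp only [Finset.prod_cons, Finset.sum_cons, Finset.card_cons]
      linarith

lemma esp_aux2 {ι : Type*} (f : ι → ℕ) (s : Finset ι) (hs : 2 ≤ s.card)
    (hf : ∀ i ∈ s, 2 ≤ f i) : 2 * ∑ i ∈ s, f i ≤ ∏ i ∈ s, f i + 2 * s.card := by
  classical
  obtain ⟨a, ha⟩ := Finset.card_pos.mp (show 0 < s.card by omega)
  have htne : (s.erase a).Nonempty := by
    rw [← Finset.card_pos, Finset.card_erase_of_mem ha]; omega
  have hft : ∀ i ∈ s.erase a, 2 ≤ f i := fun i hi => hf i (Finset.mem_of_mem_erase hi)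
  have IH := esp_aux1 f (s.erase a) htne hft
  have hpt : 2 ≤ ∏ i ∈ s.erase a, f i := by
    obtain ⟨b, hb⟩ := htne
    calc 2 ≤ f b := hft b hb
    _ ≤ ∏ i ∈ s.erase a, f i :=
      Finset.single_le_prod' (fun i hi => by have := hft i hi; omega) hb
  have hfa := hf a ha
  have key : 2 * f a + 2 * ∏ i ∈ s.erase a, f i ≤ (∏ i ∈ s.erase a, f i) * f a + 4 := by
    obtain ⟨k, hk⟩ := Nat.exists_eq_add_of_le hfa
    obtain ⟨m, hm⟩ := Nat.exists_eq_add_of_le hpt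
    rw [hk, hm]
    nlinarith [Nat.zero_le (m * k)]
  have hc : s.card = (s.erase a).card + 1 := by
    rw [Finset.card_erase_of_mem ha]; omega
  rw [← Finset.prod_erase_mul s f ha, ← Finset.sum_erase_add s f ha, hc]
  linarith

theorem esp_value_le_two_n (n r : ℕ) (hr : 2 ≤ r) (hnr : r ≤ n) (x : Fin r → ℕ)
    (hx : ∀ i, 2 ≤ x i) (h : ∏ i, x i = (∑ i, x i) + (n - r)) :
    ∏ i, x i ≤ 2 * n := by
  have key := esp_aux2 x Finset.univ (by simpa using hr) (fun i _ => hx i)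
  simp only [Finset.card_univ, Fintype.card_fin] at key
  omega
end

section
/- Suppose x₁, …, x_{r−1} ≥ 2 satisfy x₁⋯x_{r−1} = x₁ + ⋯ + x_{r−1} + (j + 1) for some j with r + j < n, and suppose w := (x₁ + ⋯ + x_{r−1} + n − r)/(x₁⋯x_{r−1} − 1) is a positive integer. Then w ≥ 2 and x₁⋯x_{r−1}·w = x₁ + ⋯ + x_{r−1} + w + (n − r). -/
theorem esp_recursion_converse (n r : ℕ) (j : ℤ) (x : Fin (r - 1) → ℤ)
    (hx : ∀ i, 2 ≤ x i) (h : (∏ i, x i) = (∑ i, x i) + (j + 1))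
    (hjn : (r : ℤ) + j < n) (w : ℤ) (hw : 0 < w)
    (hweq : w * ((∏ i, x i) - 1) = (∑ i, x i) + (n : ℤ) - r) :
    2 ≤ w ∧ (∏ i, x i) * w = (∑ i, x i) + w + ((n : ℤ) - r) := by
  constructor
  · by_contra h2
    have hw1 : w = 1 := by omega
    rw [hw1, one_mul, h] at hweq
    linarith
  · linear_combination hweq
end

section
/- If n > 2 is an exceptional value of the ESP problem (i.e., the only n-tuple of positive integers whose sum equals its product is, up to ordering, (1, …, 1, 2, n) with n−2 ones), then n − 1 is a Sophie Germain prime: both n − 1 and 2(n − 1) + 1 = 2n − 1 are prime. -/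
theorem exceptional_implies_sophie_germain (n : ℕ) (hn : 2 < n)
    (hexc : ∀ m : Multiset ℕ, Multiset.card m = n → (∀ a ∈ m, 0 < a) →
      m.prod = m.sum → m = Multiset.replicate (n - 2) 1 + {2, n}) :
    Nat.Prime (n - 1) ∧ Nat.Prime (2 * n - 1) := by
  constructor
  · -- n - 1 is prime
    by_contra hp
    obtain ⟨a, hdvd, ha2, halt⟩ := Nat.exists_dvd_of_not_prime2 (by omega : 2 ≤ n - 1) hp
    obtain ⟨b, hb⟩ := hdvd
    have hb0 : b ≠ 0 := by rintro rfl; simp at hb; omega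
    have hb1 : b ≠ 1 := by rintro rfl; simp at hb; omega
    have hb2 : 2 ≤ b := by omega
    set m : Multiset ℕ := Multiset.replicate (n - 2) 1 + {a + 1, b + 1} with hm
    have hcard : Multiset.card m = n := by
      simp [hm]; omega
    have hpos : ∀ x ∈ m, 0 < x := by
      intro x hx
      simp [hm, Multiset.mem_replicate] at hx
      rcases hx with h | h | h <;> omega
    have hps : m.prod = m.sum := by
      have h1 : m.prod = (a + 1) * (b + 1) := by simp [hm]
      have h2 : m.sum = (n - 2) + ((a + 1) + (b + 1)) := by
        simp [hm, Multiset.sum_replicate]; omega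
      rw [h1, h2]
      have hexp : (a + 1) * (b + 1) = a * b + a + b + 1 := by ring
      rw [hexp]
      generalize hr : a * b = r at hb ⊢
      omega
    have heq := hexc m hcard hpos hps
    rw [hm] at heq
    have hcancel : ({a + 1, b + 1} : Multiset ℕ) = {2, n} := add_left_cancel heq
    have hmem : a + 1 ∈ ({2, n} : Multiset ℕ) := by rw [← hcancel]; simp
    simp at hmem
    rcases hmem with h | h <;> omega
  · -- 2 * n - 1 is prime
    by_contra hp
    obtain ⟨d, hdvd, hd2, hdlt⟩ := Nat.exists_dvd_of_not_prime2 (by omega : 2 ≤ 2 * n - 1) hp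
    obtain ⟨e, he⟩ := hdvd
    have hodd : Odd (2 * n - 1) := ⟨n - 1, by omega⟩
    have he0 : e ≠ 0 := by rintro rfl; simp at he; omega
    have he1 : e ≠ 1 := by rintro rfl; simp at he; omega
    have hdodd : Odd d := by
      rcases Nat.even_or_odd d with hev | h
      · exfalso
        have : Even (2 * n - 1) := by
          rw [he]; exact hev.mul_right e
        exact (Nat.not_odd_iff_even.mpr this) hodd
      · exact h
    have heodd : Odd e := by
      rcases Nat.even_or_odd e with hev | h
      · exfalso
        have : Even (2 * n - 1) := by
          rw [he]; exact hev.mul_left d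
        exact (Nat.not_odd_iff_even.mpr this) hodd
      · exact h
    obtain ⟨p, hpd⟩ := hdodd
    obtain ⟨q, hqe⟩ := heodd
    have hp1 : 1 ≤ p := by omega
    have hq1 : 1 ≤ q := by omega
    have key : 2 * n - 1 = 4 * (p * q) + 2 * p + 2 * q + 1 := by
      rw [he, hpd, hqe]; ring
    set m : Multiset ℕ := Multiset.replicate (n - 3) 1 + {2, p + 1, q + 1} with hm
    have hcard : Multiset.card m = n := by
      simp [hm]; omega
    have hpos : ∀ x ∈ m, 0 < x := by
      intro x hx
      simp [hm, Multiset.mem_replicate] at hx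
      rcases hx with h | h | h | h <;> omega
    have hps : m.prod = m.sum := by
      have h1 : m.prod = 2 * ((p + 1) * (q + 1)) := by simp [hm]
      have h2 : m.sum = (n - 3) + (2 + ((p + 1) + (q + 1))) := by
        simp [hm, Multiset.sum_replicate]; omega
      rw [h1, h2]
      have hexp : 2 * ((p + 1) * (q + 1)) = 2 * (p * q) + 2 * p + 2 * q + 2 := by ring
      rw [hexp]
      generalize hr : p * q = r at key ⊢
      omega
    have heq := hexc m hcard hpos hps
    rw [hm] at heq
    have hsplit : Multiset.replicate (n - 2) 1 + ({2, n} : Multiset ℕ)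
        = Multiset.replicate (n - 3) 1 + ({1, 2, n} : Multiset ℕ) := by
      have : n - 2 = (n - 3) + 1 := by omega
      rw [this, Multiset.replicate_succ]
      simp [Multiset.insert_eq_cons]
      exact Multiset.cons_swap 2 1 _
    rw [hsplit] at heq
    have hcancel : ({2, p + 1, q + 1} : Multiset ℕ) = {1, 2, n} := add_left_cancel heq
    have hmem : (1 : ℕ) ∈ ({2, p + 1, q + 1} : Multiset ℕ) := by rw [hcancel]; simp
    simp at hmem
    rcases hmem with h | h | h <;> omega
end

section
/- For any integer n > 2, if the only solution (x₁, x₂) with 2 ≤ x₁ ≤ x₂ of x₁·x₂ = x₁ + x₂ + (n − 2) is (2, n), and if additionally no triple (x₁, x₂, x₃) with 2 ≤ x₁ ≤ x₂ ≤ x₃ satisfies x₁·x₂·x₃ = x₁ + x₂ + x₃ + (n − 3), then for every j with −1 ≤ j ≤ ⌊(n−7)/2⌋, (2j + 5) does not divide (j + 2 + n). -/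
theorem exceptional_divisibility_obstruction (n : ℕ) (hn : 2 < n)
    (h2 : ∀ x₁ x₂ : ℕ, 2 ≤ x₁ → x₁ ≤ x₂ → x₁ * x₂ = x₁ + x₂ + (n - 2) →
      x₁ = 2 ∧ x₂ = n)
    (h3 : ¬ ∃ x₁ x₂ x₃ : ℕ, 2 ≤ x₁ ∧ x₁ ≤ x₂ ∧ x₂ ≤ x₃ ∧
      x₁ * x₂ * x₃ = x₁ + x₂ + x₃ + (n - 3)) :
    ∀ j : ℤ, -1 ≤ j → 2 * j ≤ (n : ℤ) - 7 → ¬ (2 * j + 5) ∣ (j + 2 + (n : ℤ)) := by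
  intro j hj hjn hdvd
  obtain ⟨w, hw⟩ := hdvd
  have hn5 : (5 : ℤ) ≤ (n : ℤ) := by linarith
  have hwpos : 0 < w := by
    by_contra h
    push_neg at h
    have h1 : (2 * j + 5) * w ≤ 0 :=
      mul_nonpos_of_nonneg_of_nonpos (by linarith) h
    linarith
  have hw2 : 2 ≤ w := by
    by_contra h
    push_neg at h
    have hw1 : w = 1 := by omega
    rw [hw1, mul_one] at hw
    linarith
  have hn3 : 3 ≤ n := by omega
  have ha : (((j + 3).toNat : ℤ)) = j + 3 := Int.toNat_of_nonneg (by linarith)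
  have hwn : ((w.toNat : ℤ)) = w := Int.toNat_of_nonneg (by linarith)
  apply h3
  rcases le_total (j + 3) w with hcase | hcase
  · refine ⟨2, (j + 3).toNat, w.toNat, le_refl 2, by omega, by omega, ?_⟩
    zify [hn3]
    rw [ha, hwn]
    linear_combination -hw
  · refine ⟨2, w.toNat, (j + 3).toNat, le_refl 2, by omega, by omega, ?_⟩
    zify [hn3]
    rw [ha, hwn]
    linear_combination -hw
end
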